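/- arXiv:2601.15827 — 4 statements merged into one kernel-verified Lean document; each statement's English description precedes it below -/
import Mathlib

section
/- Let A ∈ GL(2,ℤ) with 1 not an eigenvalue of A, and ā ∈ 𝕋². Then (A,ā) is reversible in G = GL(2,ℤ) ⋉ 𝕋² if and only if A is reversible in GL(2,ℤ). -/
noncomputable section

abbrev V : Type := Fin 2 → ℝ

def L : AddSubgroup V where
  carrier := {x | ∀ i, ∃ n : ℤ, x i = (n : ℝ)}
  zero_mem' := fun i => ⟨0, by simp⟩
  add_mem' := by
    rintro a b ha hb i
    obtain ⟨m, hm⟩ := ha i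
    obtain ⟨n, hn⟩ := hb i
    exact ⟨m + n, by simp [hm, hn]⟩
  neg_mem' := by
    rintro a ha i
    obtain ⟨m, hm⟩ := ha i
    exact ⟨-m, by simp [hm]⟩

abbrev T2 := V ⧸ L

def actV (A : Matrix (Fin 2) (Fin 2) ℤ) : V →+ V :=
  (Matrix.mulVecLin (A.map (Int.cast : ℤ → ℝ))).toAddMonoidHom

lemma actV_mem (A : Matrix (Fin 2) (Fin 2) ℤ) : L ≤ L.comap (actV A) := by
  intro x hx
  show actV A x ∈ L
  intro i
  refine ⟨∑ j, A i j * Classical.choose (hx j), ?_⟩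
  show (A.map (Int.cast : ℤ → ℝ)).mulVec x i = _
  simp only [Matrix.mulVec, dotProduct, Matrix.map_apply]
  push_cast
  exact Finset.sum_congr rfl fun j _ =>
    congrArg (fun t => ((A i j : ℝ)) * t) (Classical.choose_spec (hx j))

/-- The action of an integer matrix on the torus `T2`. -/
def act (A : Matrix (Fin 2) (Fin 2) ℤ) : T2 →+ T2 :=
  QuotientAddGroup.map L L (actV A) (actV_mem A)

abbrev GL2 := (Matrix (Fin 2) (Fin 2) ℤ)ˣ

/-- Multiplication in the group `G = GL(2,ℤ) ⋉ 𝕋²`. -/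
def Gmul (p q : GL2 × T2) : GL2 × T2 :=
  (p.1 * q.1, act (p.1 : Matrix (Fin 2) (Fin 2) ℤ) q.2 + p.2)

/-- Inversion in the group `G = GL(2,ℤ) ⋉ 𝕋²`. -/
def Ginv (p : GL2 × T2) : GL2 × T2 :=
  (p.1⁻¹, -act ((p.1⁻¹ : GL2) : Matrix (Fin 2) (Fin 2) ℤ) p.2)


lemma act_mk (B : Matrix (Fin 2) (Fin 2) ℤ) (v : V) :
    act B (QuotientAddGroup.mk v) = QuotientAddGroup.mk (actV B v) := rfl

lemma map_cast_mul (B C : Matrix (Fin 2) (Fin 2) ℤ) :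
    (B * C).map (Int.cast : ℤ → ℝ) = B.map Int.cast * C.map Int.cast := by
  ext i j
  simp [Matrix.mul_apply, Matrix.map_apply]

lemma act_act (B C : Matrix (Fin 2) (Fin 2) ℤ) (x : T2) :
    act B (act C x) = act (B * C) x := by
  obtain ⟨v, rfl⟩ := QuotientAddGroup.mk_surjective x
  rw [act_mk, act_mk, act_mk]
  congr 1
  show (B.map _).mulVec ((C.map _).mulVec v) = ((B*C).map _).mulVec v
  rw [Matrix.mulVec_mulVec, map_cast_mul]

lemma act_sub_apply (B : Matrix (Fin 2) (Fin 2) ℤ) (x : T2) :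
    act (1 - B) x = x - act B x := by
  obtain ⟨v, rfl⟩ := QuotientAddGroup.mk_surjective x
  rw [act_mk, act_mk, ← QuotientAddGroup.mk_sub]
  congr 1
  show ((1 - B).map _).mulVec v = v - (B.map _).mulVec v
  rw [Matrix.map_sub _ Int.cast_sub, Matrix.sub_mulVec]
  congr 1
  rw [Matrix.map_one _ Int.cast_zero Int.cast_one, Matrix.one_mulVec]

lemma act_surj (B : Matrix (Fin 2) (Fin 2) ℤ) (hB : B.det ≠ 0) :
    Function.Surjective (act B) := by
  intro y
  obtain ⟨v, rfl⟩ := QuotientAddGroup.mk_surjective y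
  set Br := B.map (Int.cast : ℤ → ℝ) with hBr
  have hdet : Br.det ≠ 0 := by
    have : Br.det = (B.det : ℝ) := by
      rw [hBr, Matrix.det_fin_two, Matrix.det_fin_two]
      simp [Matrix.map_apply]
    rw [this]
    exact_mod_cast hB
  have hu : IsUnit Br.det := isUnit_iff_ne_zero.mpr hdet
  refine ⟨QuotientAddGroup.mk (Br⁻¹.mulVec v), ?_⟩
  rw [act_mk]
  congr 1
  show Br.mulVec (Br⁻¹.mulVec v) = v
  rw [Matrix.mulVec_mulVec, Matrix.mul_nonsing_inv _ hu, Matrix.one_mulVec]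

/-- If `1` is not an eigenvalue of `A ∈ GL(2,ℤ)`, then `(A,ā)` is reversible in
`G = GL(2,ℤ) ⋉ 𝕋²` iff `A` is reversible in `GL(2,ℤ)`. -/
theorem reversible_iff_linear_reversible (A : GL2) (a : T2)
    (hD : ((A : Matrix (Fin 2) (Fin 2) ℤ) - 1).det ≠ 0) :
    (∃ h : GL2 × T2, Gmul (Gmul h (A, a)) (Ginv h) = Ginv (A, a)) ↔
    (∃ R : GL2, R * A * R⁻¹ = A⁻¹) := by
  constructor
  · rintro ⟨⟨R, b⟩, hRb⟩
    exact ⟨R, congrArg Prod.fst hRb⟩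
  · rintro ⟨R, hR⟩
    have Mv : Matrix (Fin 2) (Fin 2) ℤ := ((A⁻¹ : GL2) : Matrix (Fin 2) (Fin 2) ℤ)
    have hMA : ((A⁻¹ : GL2) : Matrix (Fin 2) (Fin 2) ℤ) * (A : Matrix (Fin 2) (Fin 2) ℤ) = 1 :=
      A.inv_mul
    have hfac : ((A⁻¹ : GL2) : Matrix (Fin 2) (Fin 2) ℤ) * ((A : Matrix (Fin 2) (Fin 2) ℤ) - 1) =
        1 - ((A⁻¹ : GL2) : Matrix (Fin 2) (Fin 2) ℤ) := by
      rw [Matrix.mul_sub, hMA, Matrix.mul_one]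
    have hdet : (1 - ((A⁻¹ : GL2) : Matrix (Fin 2) (Fin 2) ℤ)).det ≠ 0 := by
      rw [← hfac, Matrix.det_mul]
      have hMu : IsUnit ((A⁻¹ : GL2) : Matrix (Fin 2) (Fin 2) ℤ).det :=
        (Matrix.isUnit_iff_isUnit_det _).mp (A⁻¹).isUnit
      exact mul_ne_zero (IsUnit.ne_zero hMu) hD
    obtain ⟨b, hb⟩ := act_surj _ hdet
      (-(act ((A⁻¹ : GL2) : Matrix (Fin 2) (Fin 2) ℤ) a + act (R : Matrix (Fin 2) (Fin 2) ℤ) a))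
    rw [act_sub_apply] at hb
    refine ⟨(R, b), Prod.ext hR ?_⟩
    show act ((R * A : GL2) : Matrix (Fin 2) (Fin 2) ℤ)
        (-act ((R⁻¹ : GL2) : Matrix (Fin 2) (Fin 2) ℤ) b)
        + (act (R : Matrix (Fin 2) (Fin 2) ℤ) a + b)
      = -act ((A⁻¹ : GL2) : Matrix (Fin 2) (Fin 2) ℤ) a
    have hmat : ((R * A : GL2) : Matrix (Fin 2) (Fin 2) ℤ) *
        ((R⁻¹ : GL2) : Matrix (Fin 2) (Fin 2) ℤ) = ((A⁻¹ : GL2) : Matrix (Fin 2) (Fin 2) ℤ) := by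
      rw [← Units.val_mul, hR]
    have h1 : act ((R * A : GL2) : Matrix (Fin 2) (Fin 2) ℤ)
        (-act ((R⁻¹ : GL2) : Matrix (Fin 2) (Fin 2) ℤ) b)
        = -act ((A⁻¹ : GL2) : Matrix (Fin 2) (Fin 2) ℤ) b := by
      rw [map_neg, act_act, hmat]
    rw [h1, show -act ((A⁻¹ : GL2) : Matrix (Fin 2) (Fin 2) ℤ) b
        + (act (R : Matrix (Fin 2) (Fin 2) ℤ) a + b)
      = act (R : Matrix (Fin 2) (Fin 2) ℤ) a
        + (b - act ((A⁻¹ : GL2) : Matrix (Fin 2) (Fin 2) ℤ) b) from by abel, hb]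
    abel
end
end

section
/- Every involution in GL(2,ℤ) other than the identity is conjugate in GL(2,ℤ) to one of the matrices −I, [[0,1],[1,0]], or [[1,0],[0,−1]]. -/
/-- Normalize an integer vector to a primitive one, with a Bezout completion. -/
lemma exists_primitive_aux (u v : ℤ) (h : ¬(u = 0 ∧ v = 0)) :
    ∃ p q r s g : ℤ, g ≠ 0 ∧ u = g * p ∧ v = g * q ∧ p * s - q * r = 1 := by
  have hgpos : 0 < Int.gcd u v := by
    rcases Nat.eq_zero_or_pos (Int.gcd u v) with h0 | h0
    · exact absurd (Int.gcd_eq_zero_iff.mp h0) h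
    · exact h0
  set p := u / (Int.gcd u v : ℤ) with hp
  set q := v / (Int.gcd u v : ℤ) with hq
  refine ⟨p, q, -(Int.gcdB p q), Int.gcdA p q, (Int.gcd u v : ℤ), ?_, ?_, ?_, ?_⟩
  · exact_mod_cast hgpos.ne'
  · exact (Int.mul_ediv_cancel' (Int.gcd_dvd_left u v)).symm
  · exact (Int.mul_ediv_cancel' (Int.gcd_dvd_right u v)).symm
  · have hcop : Int.gcd p q = 1 := Int.gcd_div_gcd_div_gcd hgpos
    have hb := Int.gcd_eq_gcd_ab p q
    rw [hcop] at hb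
    push_cast at hb
    linarith [hb]

/-- Key conjugation step: a trace-zero involution with a primitive fixed vector
is conjugate to the swap matrix or to `diag(1,-1)`. -/
lemma conj_step (R : (Matrix (Fin 2) (Fin 2) ℤ)ˣ) (a b c p q r s : ℤ)
    (hval : (R : Matrix (Fin 2) (Fin 2) ℤ) = !![a, b; c, -a])
    (h1 : a * p + b * q = p) (h2 : c * p - a * q = q) (h3 : p * s - q * r = 1) :
    ∃ C : (Matrix (Fin 2) (Fin 2) ℤ)ˣ,
      ((C * R * C⁻¹ : (Matrix (Fin 2) (Fin 2) ℤ)ˣ) : Matrix (Fin 2) (Fin 2) ℤ) =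
        !![0, 1; 1, 0] ∨
      ((C * R * C⁻¹ : (Matrix (Fin 2) (Fin 2) ℤ)ˣ) : Matrix (Fin 2) (Fin 2) ℤ) =
        !![1, 0; 0, -1] := by
  have hcd : !![s, -r; -q, p] * !![p, r; q, s] = 1 := by
    rw [Matrix.mul_fin_two]
    ext i j
    fin_cases i <;> fin_cases j <;>
      simp [Matrix.one_apply] <;> linarith [h3]
  have hdc : !![p, r; q, s] * !![s, -r; -q, p] = 1 := by
    rw [Matrix.mul_fin_two]
    ext i j
    fin_cases i <;> fin_cases j <;>
      simp [Matrix.one_apply] <;> linarith [h3]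
  set t : ℤ := 2 * a * r * s + b * s ^ 2 - c * r ^ 2 with ht
  have hmid : !![s, -r; -q, p] * !![a, b; c, -a] * !![p, r; q, s] = !![1, t; 0, -1] := by
    rw [Matrix.mul_fin_two, Matrix.mul_fin_two]
    ext i j
    fin_cases i <;> fin_cases j <;> simp
    · linear_combination s * h1 - r * h2 + h3
    · linear_combination (0 : ℤ)
    · linear_combination p * h2 - q * h1
    · linear_combination r * h2 - s * h1 - h3
  let C0 : (Matrix (Fin 2) (Fin 2) ℤ)ˣ := ⟨!![s, -r; -q, p], !![p, r; q, s], hcd, hdc⟩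
  rcases Int.even_or_odd t with ⟨k, hk⟩ | ⟨k, hk⟩
  · -- even case: conjugate further to diag(1,-1)
    let U : (Matrix (Fin 2) (Fin 2) ℤ)ˣ :=
      ⟨!![1, k; 0, 1], !![1, -k; 0, 1], by
        rw [Matrix.mul_fin_two, Matrix.one_fin_two]; norm_num, by
        rw [Matrix.mul_fin_two, Matrix.one_fin_two]; norm_num⟩
    refine ⟨U * C0, Or.inr ?_⟩
    have hgrp : U * C0 * R * (U * C0)⁻¹ = U * (C0 * R * C0⁻¹) * U⁻¹ := by group
    rw [hgrp]
    show (!![1, k; 0, 1] : Matrix (Fin 2) (Fin 2) ℤ) *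
        (!![s, -r; -q, p] * (R : Matrix (Fin 2) (Fin 2) ℤ) * !![p, r; q, s]) *
        !![1, -k; 0, 1] = _
    rw [hval, hmid, Matrix.mul_fin_two, Matrix.mul_fin_two]
    ext i j
    fin_cases i <;> fin_cases j <;> simp <;>
      first
      | linear_combination hk
      | linear_combination -hk
      | linear_combination (2 : ℤ) * hk
      | linear_combination (-2 : ℤ) * hk
      | ring
  · -- odd case: conjugate further to the swap matrix
    let U : (Matrix (Fin 2) (Fin 2) ℤ)ˣ :=
      ⟨!![1, k; 0, 1], !![1, -k; 0, 1], by
        rw [Matrix.mul_fin_two, Matrix.one_fin_two]; norm_num, by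
        rw [Matrix.mul_fin_two, Matrix.one_fin_two]; norm_num⟩
    let V : (Matrix (Fin 2) (Fin 2) ℤ)ˣ :=
      ⟨!![1, 0; 1, 1], !![1, 0; -1, 1], by
        rw [Matrix.mul_fin_two, Matrix.one_fin_two]; norm_num, by
        rw [Matrix.mul_fin_two, Matrix.one_fin_two]; norm_num⟩
    refine ⟨V * U * C0, Or.inl ?_⟩
    have hgrp : V * U * C0 * R * (V * U * C0)⁻¹ =
        V * (U * ((C0 * R * C0⁻¹)) * U⁻¹) * V⁻¹ := by group
    rw [hgrp]
    show (!![1, 0; 1, 1] : Matrix (Fin 2) (Fin 2) ℤ) *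
        (!![1, k; 0, 1] *
          (!![s, -r; -q, p] * (R : Matrix (Fin 2) (Fin 2) ℤ) * !![p, r; q, s]) *
          !![1, -k; 0, 1]) * !![1, 0; -1, 1] = _
    rw [hval, hmid, Matrix.mul_fin_two, Matrix.mul_fin_two, Matrix.mul_fin_two,
      Matrix.mul_fin_two]
    ext i j
    fin_cases i <;> fin_cases j <;> simp <;>
      first
      | linear_combination hk
      | linear_combination -hk
      | linear_combination (2 : ℤ) * hk
      | linear_combination (-2 : ℤ) * hk
      | ring

/-- Every involution in `GL(2,ℤ)` other than the identity is conjugate to one of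
`-I`, `[[0,1],[1,0]]`, `[[1,0],[0,-1]]`. -/
theorem involution_classification (R : (Matrix (Fin 2) (Fin 2) ℤ)ˣ)
    (hR : R * R = 1) (hne : R ≠ 1) :
    ∃ C : (Matrix (Fin 2) (Fin 2) ℤ)ˣ,
      ((C * R * C⁻¹ : (Matrix (Fin 2) (Fin 2) ℤ)ˣ) : Matrix (Fin 2) (Fin 2) ℤ) = -1 ∨
      ((C * R * C⁻¹ : (Matrix (Fin 2) (Fin 2) ℤ)ˣ) : Matrix (Fin 2) (Fin 2) ℤ) =
        !![0, 1; 1, 0] ∨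
      ((C * R * C⁻¹ : (Matrix (Fin 2) (Fin 2) ℤ)ˣ) : Matrix (Fin 2) (Fin 2) ℤ) =
        !![1, 0; 0, -1] := by
  obtain ⟨a, b, c, d, hval⟩ :
      ∃ a b c d : ℤ, (R : Matrix (Fin 2) (Fin 2) ℤ) = !![a, b; c, d] :=
    ⟨_, _, _, _, Matrix.eta_fin_two _⟩
  have hRR : (R : Matrix (Fin 2) (Fin 2) ℤ) * (R : Matrix (Fin 2) (Fin 2) ℤ) = 1 := by
    rw [← Units.val_mul, hR, Units.val_one]
  rw [hval, Matrix.mul_fin_two] at hRR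
  have h00 : a * a + b * c = 1 := by
    have := congrFun (congrFun hRR 0) 0; simpa [Matrix.one_apply] using this
  have h01 : a * b + b * d = 0 := by
    have := congrFun (congrFun hRR 0) 1; simpa [Matrix.one_apply] using this
  have h10 : c * a + d * c = 0 := by
    have := congrFun (congrFun hRR 1) 0; simpa [Matrix.one_apply] using this
  have h11 : c * b + d * d = 1 := by
    have := congrFun (congrFun hRR 1) 1; simpa [Matrix.one_apply] using this
  by_cases hd : d = -a
  · subst hd
    by_cases hcase : b = 0 ∧ a = 1
    · -- use the fixed vector (1 + a, c)
      obtain ⟨p, q, r, s, g, hg, hu, hv, hbez⟩ :=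
        exists_primitive_aux (1 + a) c (by
          rintro ⟨h1', -⟩
          rw [hcase.2] at h1'
          norm_num at h1')
      have e1 : a * p + b * q = p := by
        apply mul_left_cancel₀ hg
        have : a * (1 + a) + b * c = 1 + a := by linear_combination h00
        rw [hu, hv] at this
        linear_combination this
      have e2 : c * p - a * q = q := by
        apply mul_left_cancel₀ hg
        have : c * (1 + a) - a * c = c := by ring
        rw [hu, hv] at this
        linear_combination this + g * p * hv
      obtain ⟨C, hC⟩ := conj_step R a b c p q r s hval e1 e2 hbez
      exact ⟨C, Or.inr hC⟩
    · -- use the fixed vector (b, 1 - a)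
      obtain ⟨p, q, r, s, g, hg, hu, hv, hbez⟩ :=
        exists_primitive_aux b (1 - a) (by
          rintro ⟨h1', h2'⟩
          exact hcase ⟨h1', by linarith⟩)
      have e1 : a * p + b * q = p := by
        apply mul_left_cancel₀ hg
        have : a * b + b * (1 - a) = b := by ring
        rw [hu, hv] at this
        linear_combination this + g * q * hu
      have e2 : c * p - a * q = q := by
        apply mul_left_cancel₀ hg
        have : c * b - a * (1 - a) = 1 - a := by linear_combination h00
        rw [hu, hv] at this
        linear_combination this
      obtain ⟨C, hC⟩ := conj_step R a b c p q r s hval e1 e2 hbez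
      exact ⟨C, Or.inr hC⟩
  · -- d ≠ -a forces b = c = 0 and R = ±1
    have hb : b = 0 := by
      have hbd : b * (a + d) = 0 := by linear_combination h01
      rcases mul_eq_zero.mp hbd with h | h
      · exact h
      · exact absurd (by linarith) hd
    have hc : c = 0 := by
      have hcd' : c * (a + d) = 0 := by linear_combination h10
      rcases mul_eq_zero.mp hcd' with h | h
      · exact h
      · exact absurd (by linarith) hd
    rw [hb, hc] at h00 h11
    have ha : a = 1 ∨ a = -1 := by
      rcases Int.eq_one_or_neg_one_of_mul_eq_one' (by linarith : a * a = 1) with h | h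
      · exact Or.inl h.1
      · exact Or.inr h.1
    have hdd : d = 1 ∨ d = -1 := by
      rcases Int.eq_one_or_neg_one_of_mul_eq_one' (by linarith : d * d = 1) with h | h
      · exact Or.inl h.1
      · exact Or.inr h.1
    rcases ha with ha | ha <;> rcases hdd with hdd | hdd
    · exfalso
      apply hne
      apply Units.ext
      rw [hval, ha, hdd, hb, hc, Units.val_one]
      exact Matrix.one_fin_two.symm
    · exact absurd (by rw [ha, hdd]) hd
    · exact absurd (by rw [ha, hdd]; norm_num) hd
    · refine ⟨1, Or.inl ?_⟩
      have h1R : (1 : (Matrix (Fin 2) (Fin 2) ℤ)ˣ) * R * 1⁻¹ = R := by group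
      rw [h1R, hval, ha, hdd, hb, hc]
      ext i j
      fin_cases i <;> fin_cases j <;>
        simp [Matrix.neg_apply, Matrix.one_apply]
end

section
/- Let A ∈ GL(2,ℤ) with det(A) = −1. Then A is reversible in GL(2,ℤ) (conjugate to its inverse) if and only if A² = I. -/
/-- For `A ∈ GL(2,ℤ)` with `det A = -1`, `A` is reversible in `GL(2,ℤ)` iff `A² = I`. -/
theorem reversible_det_neg_one (A : (Matrix (Fin 2) (Fin 2) ℤ)ˣ)
    (hdet : (A : Matrix (Fin 2) (Fin 2) ℤ).det = -1) :
    (∃ R : (Matrix (Fin 2) (Fin 2) ℤ)ˣ, R * A * R⁻¹ = A⁻¹) ↔ A * A = 1 := by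
  constructor
  · rintro ⟨R, hR⟩
    set M : Matrix (Fin 2) (Fin 2) ℤ := (A : Matrix (Fin 2) (Fin 2) ℤ) with hM
    -- coercion of A⁻¹ is the matrix inverse
    have hcoe : ((A⁻¹ : (Matrix (Fin 2) (Fin 2) ℤ)ˣ) : Matrix (Fin 2) (Fin 2) ℤ) = M⁻¹ :=
      (Matrix.coe_units_inv A)
    -- trace is preserved by conjugation
    have htr : (M⁻¹).trace = M.trace := by
      rw [← hcoe, ← hR, Units.val_mul, Units.val_mul, Matrix.trace_mul_cycle]
      have : ((R⁻¹ : (Matrix (Fin 2) (Fin 2) ℤ)ˣ) : Matrix (Fin 2) (Fin 2) ℤ) *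
          ((R : (Matrix (Fin 2) (Fin 2) ℤ)ˣ) : Matrix (Fin 2) (Fin 2) ℤ) = 1 := by
        rw [← Units.val_mul, inv_mul_cancel, Units.val_one]
      rw [this, one_mul]
    -- explicit inverse via adjugate
    have hinv : M⁻¹ = Ring.inverse M.det • M.adjugate := Matrix.inv_def M
    rw [hdet] at hinv
    have hdet2 : M 0 0 * M 1 1 - M 0 1 * M 1 0 = -1 := by
      rw [← Matrix.det_fin_two]; exact hdet
    have hadj : M.adjugate = !![M 1 1, -(M 0 1); -(M 1 0), M 0 0] := by
      rw [Matrix.eta_fin_two M, Matrix.adjugate_fin_two]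
    have htr0 : M 1 1 = -(M 0 0) := by
      have h1 : Ring.inverse (-1 : ℤ) = -1 := by
        simpa using Ring.inverse_unit (-1 : ℤˣ)
      rw [hinv, h1, hadj] at htr
      simp [Matrix.trace_fin_two] at htr
      linarith
    apply Units.ext
    rw [Units.val_mul, Units.val_one]
    show M * M = 1
    rw [Matrix.eta_fin_two M]
    have h1 : (1 : Matrix (Fin 2) (Fin 2) ℤ) = !![1,0;0,1] := by
      rw [Matrix.eta_fin_two (1 : Matrix (Fin 2) (Fin 2) ℤ)]; simp
    rw [h1, htr0]
    rw [htr0] at hdet2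
    have hbc : M 0 0 * M 0 0 + M 0 1 * M 1 0 = 1 := by linarith
    ext i j
    fin_cases i <;> fin_cases j <;>
      simp [Matrix.mul_apply, Fin.sum_univ_two] <;> linarith
  · intro h
    refine ⟨1, ?_⟩
    have : A⁻¹ = A := by
      rw [inv_eq_iff_mul_eq_one, h]
    rw [this]; simp
end

section
/- Let A ∈ GL(2,ℤ) be elliptic, i.e. 0 ≤ tr(A)² < 4·det(A). Then for every ā ∈ 𝕋², the element (A,ā) is strongly reversible in G = GL(2,ℤ) ⋉ 𝕋². -/
noncomputable section

lemma represents_one_of_pos (α β γ : ℤ) (hα : 0 < α)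
    (hD : β^2 - 4*α*γ = -3 ∨ β^2 - 4*α*γ = -4) :
    ∃ x y : ℤ, α*x^2 + β*x*y + γ*y^2 = 1 := by
  classical
  have hDneg : β^2 - 4*α*γ ≤ -3 := by rcases hD with h | h <;> omega
  have hpos : ∀ x y : ℤ, (x ≠ 0 ∨ y ≠ 0) → 0 < α*x^2 + β*x*y + γ*y^2 := by
    intro x y hxy
    have key : 4*α*(α*x^2 + β*x*y + γ*y^2)
        = (2*α*x + β*y)^2 - (β^2 - 4*α*γ)*y^2 := by ring
    have h4 : 0 < 4*α*(α*x^2 + β*x*y + γ*y^2) := by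
      rw [key]
      rcases eq_or_ne y 0 with hy | hy
      · subst hy
        have hx : x ≠ 0 := by tauto
        have : (2*α*x)^2 > 0 := by positivity
        nlinarith
      · have hy2 : 0 < y^2 := by positivity
        nlinarith [sq_nonneg (2*α*x + β*y)]
    nlinarith
  have hPex : ∃ n : ℕ, ∃ x y : ℤ, (x ≠ 0 ∨ y ≠ 0) ∧ α*x^2 + β*x*y + γ*y^2 = n := by
    refine ⟨α.toNat, 1, 0, Or.inl one_ne_zero, ?_⟩
    rw [Int.toNat_of_nonneg hα.le]; ring
  set m := Nat.find hPex with hm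
  obtain ⟨x₀, y₀, hx₀y₀, hF₀⟩ := Nat.find_spec hPex
  rw [← hm] at hF₀
  have hmin : ∀ k : ℕ, k < m → ¬ ∃ x y : ℤ, (x ≠ 0 ∨ y ≠ 0) ∧ α*x^2 + β*x*y + γ*y^2 = k :=
    fun k hk => Nat.find_min hPex hk
  have hm_pos : 0 < (m:ℤ) := hF₀ ▸ hpos x₀ y₀ hx₀y₀
  clear_value m
  -- coprimality
  have hcop : IsCoprime x₀ y₀ := by
    rw [Int.isCoprime_iff_gcd_eq_one]
    by_contra hg
    have hg0 : Int.gcd x₀ y₀ ≠ 0 := by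
      intro h0
      rw [Int.gcd_eq_zero_iff] at h0
      tauto
    have hg2 : 2 ≤ (Int.gcd x₀ y₀ : ℤ) := by omega
    obtain ⟨x₁, hx₁⟩ : ((Int.gcd x₀ y₀ : ℤ)) ∣ x₀ := Int.gcd_dvd_left _ _
    obtain ⟨y₁, hy₁⟩ : ((Int.gcd x₀ y₀ : ℤ)) ∣ y₀ := Int.gcd_dvd_right _ _
    set g : ℤ := (Int.gcd x₀ y₀ : ℤ)
    have hx₁y₁ : x₁ ≠ 0 ∨ y₁ ≠ 0 := by
      rcases hx₀y₀ with h | h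
      · left; rintro rfl; simp at hx₁; exact h hx₁
      · right; rintro rfl; simp at hy₁; exact h hy₁
    have hn : 0 < α*x₁^2 + β*x₁*y₁ + γ*y₁^2 := hpos _ _ hx₁y₁
    set n : ℤ := α*x₁^2 + β*x₁*y₁ + γ*y₁^2 with hndef
    have hfac : (m:ℤ) = g^2 * n := by
      rw [← hF₀, hx₁, hy₁]; ring
    have hg4 : 4 ≤ g^2 := by nlinarith
    have hlt : n < (m:ℤ) := by nlinarith [hfac, hg4, hn]
    have : ¬ ∃ x y : ℤ, (x ≠ 0 ∨ y ≠ 0) ∧ α*x^2 + β*x*y + γ*y^2 = (n.toNat : ℤ) := by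
      have : n.toNat < m := by omega
      exact_mod_cast hmin n.toNat this
    exact this ⟨x₁, y₁, hx₁y₁, by rw [Int.toNat_of_nonneg hn.le]⟩
  obtain ⟨u, v, huv⟩ := hcop
  -- basis completion
  set s : ℤ := -v with hs
  set w : ℤ := u with hw
  have hdet1 : x₀*w - y₀*s = 1 := by rw [hs, hw]; linarith [huv]
  set U₁ : ℤ := 2*α*x₀*s + β*(x₀*w + y₀*s) + 2*γ*y₀*w with hU₁
  have hm2 : 0 < 2*(m:ℤ) := by linarith
  set q : ℤ := ((m:ℤ) - U₁) / (2*(m:ℤ)) with hq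
  have hdiv : (m:ℤ) - U₁ = 2*(m:ℤ)*q + ((m:ℤ) - U₁) % (2*(m:ℤ)) :=
    (Int.mul_ediv_add_emod _ _).symm
  have hρ₁ : 0 ≤ ((m:ℤ) - U₁) % (2*(m:ℤ)) := Int.emod_nonneg _ (by omega)
  have hρ₂ : ((m:ℤ) - U₁) % (2*(m:ℤ)) < 2*(m:ℤ) := Int.emod_lt_of_pos _ hm2
  have hU'eq : U₁ + 2*q*(m:ℤ) = (m:ℤ) - ((m:ℤ) - U₁) % (2*(m:ℤ)) := by
    linear_combination -hdiv
  have hU'bounds : -(m:ℤ) < U₁ + 2*q*(m:ℤ) ∧ U₁ + 2*q*(m:ℤ) ≤ (m:ℤ) := by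
    constructor <;> linarith
  set x₁ : ℤ := s + q*x₀ with hx₁
  set y₁ : ℤ := w + q*y₀ with hy₁
  have hdet' : x₀*y₁ - y₀*x₁ = 1 := by rw [hx₁, hy₁]; linear_combination hdet1
  have hx₁y₁ : x₁ ≠ 0 ∨ y₁ ≠ 0 := by
    by_contra h
    push_neg at h
    rw [h.1, h.2] at hdet'
    simp at hdet'
  set c' : ℤ := α*x₁^2 + β*x₁*y₁ + γ*y₁^2 with hc'
  have hc'pos : 0 < c' := hpos _ _ hx₁y₁
  have hc'ge : (m:ℤ) ≤ c' := by
    by_contra h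
    push_neg at h
    have hlt : c'.toNat < m := by omega
    exact hmin c'.toNat hlt ⟨x₁, y₁, hx₁y₁, by rw [Int.toNat_of_nonneg hc'pos.le]⟩
  clear_value c' x₁ y₁ q U₁ w s
  have hdisc : (U₁ + 2*q*(m:ℤ))^2 - 4*(m:ℤ)*c' = β^2 - 4*α*γ := by
    rw [← hF₀, hc', hU₁, hx₁, hy₁]
    linear_combination (x₀*w - y₀*s + 1) * (β^2 - 4*α*γ) * hdet1
  have hDle : -4 ≤ β^2 - 4*α*γ := by rcases hD with h | h <;> omega
  have hU2 : (U₁ + 2*q*(m:ℤ))^2 ≤ (m:ℤ)^2 := by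
    nlinarith [hU'bounds.1, hU'bounds.2]
  have h4 : 4*(m:ℤ)*(m:ℤ) ≤ 4*(m:ℤ)*c' :=
    mul_le_mul_of_nonneg_left hc'ge (by linarith)
  have hmm : (m:ℤ)*(m:ℤ) = (m:ℤ)^2 := by ring
  have h3 : 3*(m:ℤ)^2 ≤ 4 := by linarith [hdisc, hU2, hDle, h4, hmm]
  have hmle : (m:ℤ) ≤ 1 := by
    by_contra hcon
    push_neg at hcon
    have h2 : 2 ≤ (m:ℤ) := hcon
    have h4' : (4:ℤ) ≤ (m:ℤ)*(m:ℤ) := by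
      calc (4:ℤ) = 2*2 := by norm_num
      _ ≤ (m:ℤ)*(m:ℤ) := mul_le_mul h2 h2 (by norm_num) (by linarith)
    linarith [hmm]
  have hm1 : (m:ℤ) = 1 := by omega
  exact ⟨x₀, y₀, by rw [hF₀, hm1]⟩

lemma represents_pm_one (α β γ : ℤ)
    (hD : β^2 - 4*α*γ = -3 ∨ β^2 - 4*α*γ = -4) :
    ∃ x y : ℤ, α*x^2 + β*x*y + γ*y^2 = 1 ∨ α*x^2 + β*x*y + γ*y^2 = -1 := by
  have hDneg : β^2 - 4*α*γ ≤ -3 := by rcases hD with h | h <;> omega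
  have hα : α ≠ 0 := by
    rintro rfl
    nlinarith [sq_nonneg β]
  rcases lt_or_gt_of_ne hα with hneg | hpos
  · have hD' : (-β)^2 - 4*(-α)*(-γ) = -3 ∨ (-β)^2 - 4*(-α)*(-γ) = -4 := by
      rcases hD with h | h
      · left; linear_combination h
      · right; linear_combination h
    obtain ⟨x, y, hxy⟩ := represents_one_of_pos (-α) (-β) (-γ) (by linarith) hD'
    exact ⟨x, y, Or.inr (by linear_combination -hxy)⟩
  · obtain ⟨x, y, hxy⟩ := represents_one_of_pos α β γ hpos hD
    exact ⟨x, y, Or.inl hxy⟩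

/-- If `A ∈ GL(2,ℤ)` is elliptic (`0 ≤ tr(A)² < 4 det A`), then every `(A,ā)` is strongly
reversible in `G = GL(2,ℤ) ⋉ 𝕋²`. -/
theorem elliptic_strongly_reversible (A : GL2)
    (hell : 0 ≤ (Matrix.trace (A : Matrix (Fin 2) (Fin 2) ℤ)) ^ 2 ∧
      (Matrix.trace (A : Matrix (Fin 2) (Fin 2) ℤ)) ^ 2 <
        4 * (A : Matrix (Fin 2) (Fin 2) ℤ).det) :
    ∀ a : T2, (∃ h : GL2 × T2, Gmul h h = (1, 0) ∧
      Gmul (Gmul h (A, a)) (Ginv h) = Ginv (A, a)) := by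
  classical
  intro aT
  set Am : Matrix (Fin 2) (Fin 2) ℤ := (A : Matrix (Fin 2) (Fin 2) ℤ) with hAmdef
  -- determinant is 1
  have hdetunit : IsUnit Am.det := by
    have : IsUnit Am := A.isUnit
    exact (Matrix.isUnit_iff_isUnit_det Am).mp this
  have hdet : Am.det = 1 := by
    rcases Int.isUnit_iff.mp hdetunit with h | h
    · exact h
    · exfalso
      rw [h] at hell
      nlinarith [hell.1, hell.2]
  -- entries
  set a := Am 0 0 with ha
  set b := Am 0 1 with hb
  set c := Am 1 0 with hc
  set d := Am 1 1 with hd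
  have hA2 : Am = !![a, b; c, d] := by
    rw [ha, hb, hc, hd]
    exact Matrix.eta_fin_two Am
  have htr : Am.trace = a + d := Matrix.trace_fin_two Am
  have hdet2 : a * d - b * c = 1 := by
    have := Matrix.det_fin_two Am
    rw [hdet] at this
    linarith [this]
  have htrb : -1 ≤ a + d ∧ a + d ≤ 1 := by
    rw [hdet, htr] at hell
    constructor <;> nlinarith [hell.1, hell.2]
  have htr3 : a + d = -1 ∨ a + d = 0 ∨ a + d = 1 := by omega
  -- the quadratic form c x² + (d-a) xy - b y² has discriminant (a+d)² - 4
  have hD : (d - a)^2 - 4*c*(-b) = -3 ∨ (d - a)^2 - 4*c*(-b) = -4 := by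
    rcases htr3 with h | h | h
    · left; linear_combination (a + d + (-1)) * h - 4 * hdet2
    · right; linear_combination (a + d + 0) * h - 4 * hdet2
    · left; linear_combination (a + d + 1) * h - 4 * hdet2
  obtain ⟨x, y, hxy0⟩ := represents_pm_one c (d - a) (-b) hD
  obtain ⟨ε, hε, hxy⟩ : ∃ ε : ℤ, (ε = 1 ∨ ε = -1) ∧
      c*x^2 + (d - a)*x*y + (-b)*y^2 = ε := by
    rcases hxy0 with h | h
    · exact ⟨1, Or.inl rfl, h⟩
    · exact ⟨-1, Or.inr rfl, h⟩
  have hε2 : ε * ε = 1 := by rcases hε with h | h <;> rw [h] <;> norm_num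
  -- conjugating matrix P
  set Pm : Matrix (Fin 2) (Fin 2) ℤ := !![x, a*x + b*y; y, c*x + d*y] with hPm
  have hdetP : Pm.det = ε := by
    rw [hPm, Matrix.det_fin_two_of]
    linear_combination hxy
  have hPQ : Pm * (ε • Pm.adjugate) = 1 := by
    rw [Matrix.mul_smul, Matrix.mul_adjugate, hdetP, smul_smul, hε2, one_smul]
  have hQP : (ε • Pm.adjugate) * Pm = 1 := by
    rw [Matrix.smul_mul, Matrix.adjugate_mul, hdetP, smul_smul, hε2, one_smul]
  set Pu : GL2 := ⟨Pm, ε • Pm.adjugate, hPQ, hQP⟩ with hPu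
  -- companion matrix C and its inverse
  set Cm : Matrix (Fin 2) (Fin 2) ℤ := !![0, -1; 1, a + d] with hCm
  set Cm' : Matrix (Fin 2) (Fin 2) ℤ := !![a + d, 1; -1, 0] with hCm'
  have hCC1 : Cm * Cm' = 1 := by
    rw [hCm, hCm']
    ext i j
    fin_cases i <;> fin_cases j <;>
      simp [Matrix.mul_apply, Fin.sum_univ_two, Matrix.one_apply] <;> ring
  have hCC2 : Cm' * Cm = 1 := by
    rw [hCm, hCm']
    ext i j
    fin_cases i <;> fin_cases j <;>
      simp [Matrix.mul_apply, Fin.sum_univ_two, Matrix.one_apply] <;> ring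
  set Cu : GL2 := ⟨Cm, Cm', hCC1, hCC2⟩ with hCu
  set Jm : Matrix (Fin 2) (Fin 2) ℤ := !![0, 1; 1, 0] with hJm
  have hJJ : Jm * Jm = 1 := by
    rw [hJm]
    ext i j
    fin_cases i <;> fin_cases j <;>
      simp [Matrix.mul_apply, Fin.sum_univ_two, Matrix.one_apply]
  set Ju : GL2 := ⟨Jm, Jm, hJJ, hJJ⟩ with hJu
  -- A P = P C
  have hAP : Am * Pm = Pm * Cm := by
    rw [hA2, hPm, hCm]
    ext i j
    fin_cases i <;> fin_cases j <;>
      simp [Matrix.mul_apply, Fin.sum_univ_two]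
    · linear_combination (-x) * hdet2
    · linear_combination (-y) * hdet2
  have hAu : A = Pu * Cu * Pu⁻¹ := by
    apply Units.ext
    have hval : ((Pu * Cu * Pu⁻¹ : GL2) : Matrix (Fin 2) (Fin 2) ℤ)
        = Pm * Cm * (ε • Pm.adjugate) := rfl
    rw [hval]
    calc (A : Matrix (Fin 2) (Fin 2) ℤ) = Am := rfl
    _ = Am * (Pm * (ε • Pm.adjugate)) := by rw [hPQ, mul_one]
    _ = (Am * Pm) * (ε • Pm.adjugate) := by rw [mul_assoc]
    _ = Pm * Cm * (ε • Pm.adjugate) := by rw [hAP]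
  have hJ2 : Ju * Ju = 1 := by
    apply Units.ext
    exact hJJ
  have hJCJ : Ju * Cu * Ju = Cu⁻¹ := by
    apply Units.ext
    show Jm * Cm * Jm = Cm'
    rw [hJm, hCm, hCm']
    ext i j
    fin_cases i <;> fin_cases j <;>
      simp [Matrix.mul_apply, Fin.sum_univ_two]
  set Ru : GL2 := Pu * Ju * Pu⁻¹ with hRu
  have hR2 : Ru * Ru = 1 := by
    rw [hRu]
    calc (Pu * Ju * Pu⁻¹) * (Pu * Ju * Pu⁻¹) = Pu * (Ju * Ju) * Pu⁻¹ := by group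
    _ = 1 := by rw [hJ2]; group
  have hRAR : Ru * A * Ru = A⁻¹ := by
    rw [hRu, hAu]
    calc (Pu * Ju * Pu⁻¹) * (Pu * Cu * Pu⁻¹) * (Pu * Ju * Pu⁻¹)
        = Pu * (Ju * Cu * Ju) * Pu⁻¹ := by group
    _ = Pu * Cu⁻¹ * Pu⁻¹ := by rw [hJCJ]
    _ = (Pu * Cu * Pu⁻¹)⁻¹ := by group
  -- real matrices
  set ψ : Matrix (Fin 2) (Fin 2) ℤ → Matrix (Fin 2) (Fin 2) ℝ :=
    fun M => M.map (Int.cast : ℤ → ℝ) with hψ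
  have hψmul : ∀ M N : Matrix (Fin 2) (Fin 2) ℤ, ψ (M * N) = ψ M * ψ N := by
    intro M N
    exact Matrix.map_mul (f := Int.castRingHom ℝ)
  have hψone : ψ (1 : Matrix (Fin 2) (Fin 2) ℤ) = 1 :=
    Matrix.map_one _ Int.cast_zero Int.cast_one
  set 𝓐 : Matrix (Fin 2) (Fin 2) ℝ := ψ Am with h𝓐
  set 𝓡 : Matrix (Fin 2) (Fin 2) ℝ := ψ (Ru : Matrix (Fin 2) (Fin 2) ℤ) with h𝓡
  set 𝓑 : Matrix (Fin 2) (Fin 2) ℝ := ψ ((A⁻¹ : GL2) : Matrix (Fin 2) (Fin 2) ℤ) with h𝓑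
  have hAB : 𝓐 * 𝓑 = 1 := by
    rw [h𝓐, h𝓑, ← hψmul]
    have : Am * ((A⁻¹ : GL2) : Matrix (Fin 2) (Fin 2) ℤ) = 1 := A.mul_inv
    rw [this, hψone]
  have hBA : 𝓑 * 𝓐 = 1 := by
    rw [h𝓐, h𝓑, ← hψmul]
    have : ((A⁻¹ : GL2) : Matrix (Fin 2) (Fin 2) ℤ) * Am = 1 := A.inv_mul
    rw [this, hψone]
  have hRR : 𝓡 * 𝓡 = 1 := by
    rw [h𝓡, ← hψmul]
    have : (Ru : Matrix (Fin 2) (Fin 2) ℤ) * (Ru : Matrix (Fin 2) (Fin 2) ℤ) = 1 := by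
      rw [← Units.val_mul, hR2, Units.val_one]
    rw [this, hψone]
  have hRAR_real : 𝓡 * 𝓐 * 𝓡 = 𝓑 := by
    rw [h𝓡, h𝓐, h𝓑, ← hψmul, ← hψmul]
    congr 1
    rw [← Units.val_mul, ← Units.val_mul, hRAR]
  -- invertibility of 𝓐 - 1
  have hsub : ψ (Am - 1) = 𝓐 - 1 := by
    rw [h𝓐, hψ]
    ext i j
    simp [Matrix.map_apply, Matrix.sub_apply, Matrix.one_apply]
    try split_ifs <;> simp
  have hAm1 : Am - 1 = !![a - 1, b; c, d - 1] := by
    rw [hA2]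
    ext i j
    fin_cases i <;> fin_cases j <;> simp [Matrix.one_apply]
  have hdetZ : (Am - 1).det = 2 - (a + d) := by
    rw [hAm1, Matrix.det_fin_two_of]
    linear_combination hdet2
  have hdetR : (𝓐 - 1).det = ((2 - (a + d) : ℤ) : ℝ) := by
    rw [← hsub]
    simp only [hψ]
    have h7 := RingHom.map_det (Int.castRingHom ℝ) (Am - 1)
    rw [RingHom.mapMatrix_apply, Int.coe_castRingHom] at h7
    rw [← h7, hdetZ]
  have hdetne : (𝓐 - 1).det ≠ 0 := by
    rw [hdetR]
    have : (2 : ℤ) - (a + d) ≠ 0 := by omega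
    exact_mod_cast this
  have hMunit : IsUnit (𝓐 - 1).det := isUnit_iff_ne_zero.mpr hdetne
  set N : Matrix (Fin 2) (Fin 2) ℝ := (𝓐 - 1)⁻¹ with hN
  have hMN : (𝓐 - 1) * N = 1 := Matrix.mul_nonsing_inv _ hMunit
  have hNM : N * (𝓐 - 1) = 1 := Matrix.nonsing_inv_mul _ hMunit
  -- the key matrix identities
  set K : Matrix (Fin 2) (Fin 2) ℝ := N * (1 + 𝓐 * 𝓡) with hK
  have e2 : (𝓐 - 1) * K = 1 + 𝓐 * 𝓡 := by
    rw [hK, ← mul_assoc, hMN, one_mul]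
  have h1 : 𝓐 * 𝓡 = 𝓡 * 𝓑 := by
    rw [← hRAR_real, ← mul_assoc, ← mul_assoc, hRR, one_mul]
  have s1 : (𝓐 - 1) * 𝓡 = 𝓡 * (𝓑 - 1) := by
    rw [sub_mul, mul_sub, one_mul, mul_one, h1]
  have s2 : (𝓑 - 1) * N = -𝓑 := by
    have hB1 : 𝓑 - 1 = -(𝓑 * (𝓐 - 1)) := by
      rw [mul_sub, hBA, mul_one, neg_sub]
    rw [hB1, neg_mul, mul_assoc, hMN, mul_one]
  have s3 : (𝓑 - 1) * K = -(𝓑 + 𝓡) := by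
    rw [hK, ← mul_assoc, s2, neg_mul, mul_add, mul_one, ← mul_assoc, hBA, one_mul]
  have e1 : (𝓐 - 1) * (𝓡 * K) = -(1 + 𝓐 * 𝓡) := by
    rw [← mul_assoc, s1, mul_assoc, s3, mul_neg, mul_add, hRR, ← h1]
    rw [neg_inj, add_comm]
  have I1 : 𝓡 * K + K = 0 := by
    have step : N * ((𝓐 - 1) * (𝓡 * K) + (𝓐 - 1) * K) = 𝓡 * K + K := by
      rw [mul_add, ← mul_assoc N, ← mul_assoc N, hNM, one_mul, one_mul]
    rw [← step, e1, e2, neg_add_cancel, mul_zero]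
  have I2 : 𝓑 * K - K + 𝓡 + 𝓑 = 0 := by
    have e2' : 𝓐 * K - K = 1 + 𝓐 * 𝓡 := by
      rw [← e2, sub_mul, one_mul]
    have e3 : 𝓑 * (𝓐 * K) - 𝓑 * K = 𝓑 * (1 + 𝓐 * 𝓡) := by
      rw [← mul_sub, e2']
    rw [← mul_assoc, hBA, one_mul] at e3
    have e5 : 𝓑 * (1 + 𝓐 * 𝓡) = 𝓑 + 𝓡 := by
      rw [mul_add, mul_one, ← mul_assoc, hBA, one_mul]
    rw [e5] at e3
    have : 𝓑 * K - K + 𝓡 + 𝓑 = -(K - 𝓑 * K) + (𝓑 + 𝓡) := by abel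
    rw [this, e3, neg_add_cancel]
  -- choose a lift of aT and define the translation part
  obtain ⟨a₀, ha₀⟩ := QuotientAddGroup.mk_surjective aT
  set r₀ : V := (-K).mulVec a₀ with hr₀
  have hact : ∀ (M : Matrix (Fin 2) (Fin 2) ℤ) (v : V),
      act M (QuotientAddGroup.mk v) = QuotientAddGroup.mk ((ψ M).mulVec v) := by
    intro M v
    rfl
  -- vector identities
  have v1 : (ψ (Ru : Matrix (Fin 2) (Fin 2) ℤ)).mulVec r₀ + r₀ = 0 := by
    rw [← h𝓡, hr₀, Matrix.mulVec_mulVec, ← Matrix.add_mulVec]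
    have : 𝓡 * -K + -K = 0 := by
      rw [mul_neg, ← neg_add, I1, neg_zero]
    rw [this, Matrix.zero_mulVec]
  have v2 : -((𝓡 * 𝓐).mulVec (𝓡.mulVec r₀)) + (𝓡.mulVec a₀ + r₀) = -(𝓑.mulVec a₀) := by
    rw [Matrix.mulVec_mulVec, hRAR_real, hr₀, Matrix.mulVec_mulVec,
      ← Matrix.neg_mulVec, ← Matrix.add_mulVec, ← Matrix.add_mulVec,
      ← Matrix.neg_mulVec]
    congr 1
    have h6 : -(𝓑 * -K) + (𝓡 + -K) = -𝓑 + (𝓑 * K - K + 𝓡 + 𝓑) := by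
      rw [mul_neg, neg_neg]; abel
    rw [h6, I2, add_zero]
  -- assemble
  refine ⟨(Ru, QuotientAddGroup.mk r₀), ?_, ?_⟩
  · simp only [Gmul]
    rw [Prod.mk.injEq]
    refine ⟨hR2, ?_⟩
    rw [hact]
    rw [← QuotientAddGroup.mk_add]
    rw [v1]
    rfl
  · have hRinv : Ru⁻¹ = Ru := (eq_inv_of_mul_eq_one_left hR2).symm
    rw [← ha₀]
    simp only [Gmul, Ginv]
    rw [Prod.mk.injEq]
    constructor
    · rw [hRinv]
      exact hRAR
    · rw [hRinv]
      simp only [hact, ← QuotientAddGroup.mk_neg, ← QuotientAddGroup.mk_add]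
      congr 1
      have hval : ψ ((Ru * A : GL2) : Matrix (Fin 2) (Fin 2) ℤ) = 𝓡 * 𝓐 := by
        rw [Units.val_mul, hψmul, ← h𝓡, ← h𝓐]
      rw [hval, Matrix.mulVec_neg, ← h𝓡, ← h𝓑]
      exact v2
end
end
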